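/- Let ⤳ be a relation on a finite set N with designated disjoint subsets I, T, O covering N, satisfying the enriched-bundle conditions and the No State Split Principle, and suppose additionally that each node carries a pre-state and/or post-state in a set St with: initiation and transition nodes have a post-state, transition and observation nodes have a pre-state, and n₁ ⤳ n₂ implies post(n₁) = pre(n₂). Then along any maximal ⤳⁺-chain of initiation/transition nodes n₀ ⤳⁺ n₁ ⤳⁺ … ⤳⁺ n_k within one partition class, the sequence post(n₀), post(n₁), …, post(n_k) satisfies pre(n_{j+1}) = post(n_j) for all j, hence determines a computation under the transition relation ▷ = { (pre(n), post(n)) : n ∈ T }. -/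

import Mathlib

/-- Along any maximal `⤳`-chain of initiation/transition nodes
within one partition class of a state-respecting bundle, the pre-state of each
node equals the post-state of its predecessor, and the sequence of post-states
is a computation under `▷ = {(pre n, post n) : n ∈ T}`. -/
theorem stmt_11 {V St : Type*} [Fintype V] (lead : V → V → Prop)
    (I T O : Set V)
    (huniq : ∀ n ∈ T ∪ O, ∃! m, lead m n)
    (hinit : ∀ n ∈ I, ¬ ∃ m, lead m n)
    (hacyc : Irreflexive (Relation.TransGen lead))
    (hsrc : ∀ m n, lead m n → m ∈ I ∪ T)
    (htgt : ∀ m n, lead m n → n ∈ T ∪ O)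
    (hNSS : ∀ n n₁ n₂, lead n n₁ → lead n n₂ → n₁ ∈ T → n₂ ∈ T → n₁ = n₂)
    -- pre- and post-states carried by the nodes
    (pre post : V → St)
    (hmatch : ∀ n₁ n₂, lead n₁ n₂ → post n₁ = pre n₂)
    -- a chain of initiation/transition nodes within the class of `n₀`
    (n₀ : V) (hn₀ : n₀ ∈ I)
    (ns : List V) (hhead : ns.head? = some n₀)
    (hchain : ns.Chain' lead)
    (hIT : ∀ n ∈ ns, n ∈ I ∪ T)
    (hclass : ∀ n ∈ ns, Relation.ReflTransGen lead n₀ n) :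
    ns.Chain' (fun a b => pre b = post a) ∧
    (ns.map post).Chain' (fun s t => ∃ n ∈ T, pre n = s ∧ post n = t) := by
  constructor
  · exact hchain.imp fun a b h => (hmatch a b h).symm
  · unfold List.Chain' at *
    rw [List.isChain_map, List.isChain_iff_getElem] at *
    intro i hi
    have h := hchain i hi
    have hb : ns.get ⟨i+1, by omega⟩ ∈ ns := List.get_mem _ _
    have hT : ns.get ⟨i+1, by omega⟩ ∈ T := by
      rcases hIT _ hb with hI | hT
      · exact absurd ⟨_, h⟩ (hinit _ hI)
      · exact hT
    exact ⟨_, hT, (hmatch _ _ h).symm, rfl⟩
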